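/- Let →P and ←P be n×n matrices with P = →P + ←P, where →P has nonnegative entries and powers tending to zero (so I − →P is invertible). Define P̃ = (I − →P)^{-1} ←P. If P is row-stochastic and ←P, →P are the column splitting of P with respect to a subset S_π, then P̃ is row-stochastic, and moreover every row of P̃ is supported on S_π: P̃(i,j) = 0 whenever j ∉ S_π, and ∑_{j ∈ S_π} P̃(i,j) = 1 for all i. -/

import Mathlib

open Matrix Filter Finset

theorem stmt_6 {n : ℕ} (Sπ : Finset (Fin n)) (P Pl Pr : Matrix (Fin n) (Fin n) ℝ)
    (hnonneg : ∀ i j, 0 ≤ P i j) (hrow : ∀ i, ∑ j, P i j = 1)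
    (hPl : ∀ i j, Pl i j = if j ∈ Sπ then P i j else 0)
    (hPr : ∀ i j, Pr i j = if j ∉ Sπ then P i j else 0)
    (hlim : Tendsto (fun k : ℕ => Pr ^ k) atTop (nhds 0))
    (Ptilde : Matrix (Fin n) (Fin n) ℝ)
    (hPt : Ptilde = (1 - Pr)⁻¹ * Pl) :
    (∀ i j, 0 ≤ Ptilde i j) ∧ (∀ i, ∑ j, Ptilde i j = 1) ∧
      (∀ i j, j ∉ Sπ → Ptilde i j = 0) ∧ (∀ i, ∑ j ∈ Sπ, Ptilde i j = 1) := by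
  have hPrnn : ∀ i j, 0 ≤ Pr i j := by
    intro i j; rw [hPr]; split <;> simp [hnonneg i j]
  have hPlnn : ∀ i j, 0 ≤ Pl i j := by
    intro i j; rw [hPl]; split <;> simp [hnonneg i j]
  -- powers of Pr are nonneg
  have hpow : ∀ k : ℕ, ∀ i j, 0 ≤ (Pr ^ k) i j := by
    intro k
    induction k with
    | zero => intro i j; simp [Matrix.one_apply]; split <;> norm_num
    | succ m ih =>
      intro i j
      rw [pow_succ, Matrix.mul_apply]
      exact Finset.sum_nonneg fun k _ => mul_nonneg (ih i k) (hPrnn k j)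
  -- invertibility of 1 - Pr
  have hdet : IsUnit (1 - Pr).det := by
    rw [isUnit_iff_ne_zero]
    intro h0
    obtain ⟨v, hv, hmv⟩ := (Matrix.exists_mulVec_eq_zero_iff).mpr h0
    have hfixv : Pr *ᵥ v = v := by
      have := hmv
      rw [Matrix.sub_mulVec, Matrix.one_mulVec, sub_eq_zero] at this
      exact this.symm
    have hfix : ∀ k : ℕ, (Pr ^ k) *ᵥ v = v := by
      intro k
      induction k with
      | zero => simp
      | succ m ih => rw [pow_succ', ← Matrix.mulVec_mulVec, ih, hfixv]
    have hten : Tendsto (fun k : ℕ => (Pr ^ k) *ᵥ v) atTop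
        (nhds ((0 : Matrix (Fin n) (Fin n) ℝ) *ᵥ v)) :=
      ((Continuous.matrix_mulVec continuous_id continuous_const).tendsto _).comp hlim
    rw [Matrix.zero_mulVec] at hten
    have h2 : Tendsto (fun _ : ℕ => v) atTop (nhds (0 : Fin n → ℝ)) := by
      simpa [hfix] using hten
    exact hv (tendsto_nhds_unique tendsto_const_nhds h2)
  have hinv_mul : (1 - Pr)⁻¹ * (1 - Pr) = 1 := Matrix.nonsing_inv_mul _ hdet
  -- partial sums converge to the inverse
  have hgeom : ∀ m : ℕ, (∑ k ∈ Finset.range m, Pr ^ k) = (1 - Pr)⁻¹ - (1 - Pr)⁻¹ * Pr ^ m := by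
    intro m
    have h := mul_neg_geom_sum Pr m
    calc (∑ k ∈ Finset.range m, Pr ^ k)
        = (1 - Pr)⁻¹ * ((1 - Pr) * ∑ k ∈ Finset.range m, Pr ^ k) := by
          rw [← Matrix.mul_assoc, hinv_mul, Matrix.one_mul]
      _ = (1 - Pr)⁻¹ * (1 - Pr ^ m) := by rw [h]
      _ = (1 - Pr)⁻¹ - (1 - Pr)⁻¹ * Pr ^ m := by rw [Matrix.mul_sub, Matrix.mul_one]
  have htend : Tendsto (fun m : ℕ => ∑ k ∈ Finset.range m, Pr ^ k) atTop (nhds ((1 - Pr)⁻¹)) := by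
    have hc : Tendsto (fun m : ℕ => (1 - Pr)⁻¹ - (1 - Pr)⁻¹ * Pr ^ m) atTop
        (nhds ((1 - Pr)⁻¹ - (1 - Pr)⁻¹ * 0)) := by
      exact tendsto_const_nhds.sub
        (((Continuous.matrix_mul continuous_const continuous_id).tendsto _).comp hlim)
    simpa [hgeom] using hc
  -- nonnegativity of inverse entries
  have hinvnn : ∀ i j, 0 ≤ (1 - Pr)⁻¹ i j := by
    intro i j
    have hentry : Tendsto (fun m : ℕ => (∑ k ∈ Finset.range m, Pr ^ k) i j) atTop
        (nhds ((1 - Pr)⁻¹ i j)) := by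
      have hc := (((continuous_apply j).comp (continuous_apply i)).tendsto ((1 - Pr)⁻¹)).comp htend
      exact hc
    refine ge_of_tendsto' hentry fun m => ?_
    simp only [Matrix.sum_apply]
    exact Finset.sum_nonneg fun k _ => hpow k i j
  -- nonnegativity of Ptilde
  have h1 : ∀ i j, 0 ≤ Ptilde i j := by
    intro i j
    rw [hPt, Matrix.mul_apply]
    exact Finset.sum_nonneg fun k _ => mul_nonneg (hinvnn i k) (hPlnn k j)
  -- support
  have h3 : ∀ i j, j ∉ Sπ → Ptilde i j = 0 := by
    intro i j hj
    rw [hPt, Matrix.mul_apply]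
    refine Finset.sum_eq_zero fun k _ => ?_
    rw [hPl, if_neg hj, mul_zero]
  -- row sums
  have hPlrow : ∀ k, ∑ j, Pl k j = 1 - ∑ j, Pr k j := by
    intro k
    have : ∑ j, Pl k j + ∑ j, Pr k j = ∑ j, P k j := by
      rw [← Finset.sum_add_distrib]
      refine Finset.sum_congr rfl fun j _ => ?_
      rw [hPl, hPr]
      by_cases hj : j ∈ Sπ <;> simp [hj]
    linarith [hrow k, this]
  have hrowinv : ∀ i, ∑ j, ((1 : Matrix (Fin n) (Fin n) ℝ) - Pr)⁻¹ i j
      - ∑ j, ((1 - Pr)⁻¹ * Pr) i j = 1 := by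
    intro i
    have key : (1 - Pr)⁻¹ - (1 - Pr)⁻¹ * Pr = 1 := by
      have := hinv_mul
      rw [Matrix.mul_sub, Matrix.mul_one] at this
      exact this
    have := congrArg (fun M : Matrix (Fin n) (Fin n) ℝ => ∑ j, M i j) key
    simp only [Matrix.sub_apply, Finset.sum_sub_distrib] at this
    rw [this]
    simp [Matrix.one_apply]
  have h2 : ∀ i, ∑ j, Ptilde i j = 1 := by
    intro i
    rw [hPt]
    have : ∑ j, ((1 - Pr)⁻¹ * Pl) i j
        = ∑ k, (1 - Pr)⁻¹ i k * ∑ j, Pl k j := by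
      simp only [Matrix.mul_apply, Finset.mul_sum]
      rw [Finset.sum_comm]
    rw [this]
    have : ∑ k, (1 - Pr)⁻¹ i k * ∑ j, Pl k j
        = ∑ k, (1 - Pr)⁻¹ i k - ∑ k, ((1 - Pr)⁻¹ i k * ∑ j, Pr k j) := by
      rw [← Finset.sum_sub_distrib]
      refine Finset.sum_congr rfl fun k _ => ?_
      rw [hPlrow k]; ring
    rw [this]
    have : ∑ k, ((1 - Pr)⁻¹ i k * ∑ j, Pr k j) = ∑ j, ((1 - Pr)⁻¹ * Pr) i j := by
      simp only [Matrix.mul_apply, Finset.mul_sum]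
      rw [Finset.sum_comm]
    rw [this]
    exact hrowinv i
  refine ⟨h1, h2, h3, fun i => ?_⟩
  have := h2 i
  rwa [← Finset.sum_subset (Finset.subset_univ Sπ) (fun j _ hj => h3 i j hj)] at this
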